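/- Let X be a regular P-space and let x ∈ X. Then the following statements are equivalent: (1) X has a countable local base at x; (2) there exists a sequence of nonempty open subsets of X converging to x; (3) X has a countable local π-base at x. -/
import Mathlib


open Filter Topology Set

/-- `x : ℕ → X` has no convergent subsequence. -/
def NoConvSubseq {X : Type*} [TopologicalSpace X] (x : ℕ → X) : Prop :=
  ∀ φ : ℕ → ℕ, StrictMono φ → ∀ y : X, ¬ Filter.Tendsto (x ∘ φ) Filter.atTop (nhds y)

/-- Selectively highly divergent. -/
def SHD (X : Type*) [TopologicalSpace X] : Prop :=
  ∀ U : ℕ → Set X, (∀ n, IsOpen (U n)) → (∀ n, (U n).Nonempty) →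
    ∃ x : ℕ → X, (∀ n, x n ∈ U n) ∧ NoConvSubseq x

/-- Weakly selectively highly divergent. -/
def WSHD (X : Type*) [TopologicalSpace X] : Prop :=
  ∀ U : ℕ → Set X, (∀ n, IsOpen (U n)) → (∀ n, (U n).Nonempty) →
    ∃ A : Set ℕ, A.Infinite ∧ ∃ x : ℕ → X, (∀ n ∈ A, x n ∈ U n) ∧
      ∀ φ : ℕ → ℕ, StrictMono φ → (∀ n, φ n ∈ A) →
        ∀ y : X, ¬ Filter.Tendsto (x ∘ φ) Filter.atTop (nhds y)

/-- A sequence of nonempty open sets converges to a point. -/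
def OpenSeqTendsto {X : Type*} [TopologicalSpace X] (U : ℕ → Set X) (x : X) : Prop :=
  ∀ V : Set X, IsOpen V → x ∈ V → ∃ m : ℕ, ∀ n ≥ m, U n ⊆ V

/-- Openly highly divergent: no sequence of nonempty open sets converges to a point. -/
def OHD (X : Type*) [TopologicalSpace X] : Prop :=
  ¬ ∃ (U : ℕ → Set X) (x : X),
      (∀ n, IsOpen (U n)) ∧ (∀ n, (U n).Nonempty) ∧ OpenSeqTendsto U x

/-- `x` has a countable local (neighbourhood) base. -/
def HasCountableLocalBase {X : Type*} [TopologicalSpace X] (x : X) : Prop :=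
  ∃ B : Set (Set X), B.Countable ∧ (∀ V ∈ B, IsOpen V ∧ x ∈ V) ∧
    ∀ U : Set X, IsOpen U → x ∈ U → ∃ V ∈ B, V ⊆ U

/-- `x` has a countable local π-base. -/
def HasCountableLocalPiBase {X : Type*} [TopologicalSpace X] (x : X) : Prop :=
  ∃ B : Set (Set X), B.Countable ∧ (∀ V ∈ B, IsOpen V ∧ V.Nonempty) ∧
    ∀ U : Set X, IsOpen U → x ∈ U → ∃ V ∈ B, V ⊆ U

/-- UC: every point has uncountable character. -/
def UC (X : Type*) [TopologicalSpace X] : Prop := ∀ x : X, ¬ HasCountableLocalBase x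

/-- π-UC: every point has uncountable π-character. -/
def PiUC (X : Type*) [TopologicalSpace X] : Prop := ∀ x : X, ¬ HasCountableLocalPiBase x

/-- Sequentially discrete: every convergent sequence is eventually constant. -/
def SD (X : Type*) [TopologicalSpace X] : Prop :=
  ∀ (x : ℕ → X) (y : X), Filter.Tendsto x Filter.atTop (nhds y) →
    ∃ m : ℕ, ∀ n ≥ m, x n = x m

/-- The Pixley–Roy hyperspace: nonempty finite subsets of `X`. -/
def PR (X : Type*) : Type _ := {F : Set X // F.Finite ∧ F.Nonempty}

/-- The basic sets `[F, U]` of the Pixley–Roy topology. -/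
def PRBasic {X : Type*} (F U : Set X) : Set (PR X) :=
  {G : PR X | F ⊆ G.1 ∧ G.1 ⊆ U}

instance PR.instTopologicalSpace {X : Type*} [TopologicalSpace X] :
    TopologicalSpace (PR X) :=
  TopologicalSpace.generateFrom
    {S | ∃ (F : PR X) (U : Set X), IsOpen U ∧ S = PRBasic F.1 U}

/-- P-space: countable intersections of open sets are open. -/
def PSpace (X : Type*) [TopologicalSpace X] : Prop :=
  ∀ U : ℕ → Set X, (∀ n, IsOpen (U n)) → IsOpen (⋂ n, U n)

/-- `Σ(Y, p, κ)`: points of `Y^κ` differing from the constant `p` on countably many coordinates. -/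
def SigmaProd (Y : Type*) (p : Y) (κ : Type*) : Set (κ → Y) :=
  {x | {α : κ | x α ≠ p}.Countable}

/-- `σ(Y, p, κ)`: points of `Y^κ` differing from the constant `p` on finitely many coordinates. -/
def SmallSigmaProd (Y : Type*) (p : Y) (κ : Type*) : Set (κ → Y) :=
  {x | {α : κ | x α ≠ p}.Finite}

theorem statement15 {X : Type*} [TopologicalSpace X] [RegularSpace X] (hP : PSpace X) (x : X) :
    List.TFAE [
      HasCountableLocalBase x,
      ∃ U : ℕ → Set X, (∀ n, IsOpen (U n)) ∧ (∀ n, (U n).Nonempty) ∧ OpenSeqTendsto U x,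
      HasCountableLocalPiBase x] := by

  tfae_have 1 → 2
  · rintro ⟨B, hBc, hBo, hBb⟩
    obtain ⟨V0, hV0B, _⟩ := hBb Set.univ isOpen_univ (Set.mem_univ x)
    obtain ⟨f, hf⟩ := hBc.exists_eq_range ⟨V0, hV0B⟩
    have hfB : ∀ n, f n ∈ B := fun n => hf ▸ Set.mem_range_self n
    refine ⟨fun n => ⋂ k ∈ Finset.range (n+1), f k, fun n => ?_, fun n => ?_, ?_⟩
    · exact isOpen_biInter_finset fun k _ => (hBo _ (hfB k)).1
    · exact ⟨x, Set.mem_iInter₂.mpr fun k _ => (hBo _ (hfB k)).2⟩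
    · intro W hW hxW
      obtain ⟨U, hUB, hUW⟩ := hBb W hW hxW
      obtain ⟨m, rfl⟩ : U ∈ Set.range f := hf ▸ hUB
      refine ⟨m, fun n hn y hy => hUW ?_⟩
      exact Set.mem_iInter₂.mp hy m (Finset.mem_range.mpr (Nat.lt_succ_of_le hn))
  tfae_have 2 → 3
  · rintro ⟨U, hUo, hUne, hUt⟩
    refine ⟨Set.range U, Set.countable_range U, ?_, ?_⟩
    · rintro V ⟨n, rfl⟩; exact ⟨hUo n, hUne n⟩
    · intro W hW hxW
      obtain ⟨m, hm⟩ := hUt W hW hxW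
      exact ⟨U m, Set.mem_range_self m, hm m le_rfl⟩
  tfae_have 3 → 1
  · rintro ⟨B, hBc, hBo, hBb⟩
    classical
    obtain ⟨V0, hV0B, _⟩ := hBb Set.univ isOpen_univ (Set.mem_univ x)
    obtain ⟨V, hV⟩ := hBc.exists_eq_range ⟨V0, hV0B⟩
    have hVB : ∀ n, V n ∈ B := fun n => hV ▸ Set.mem_range_self n
    have hVo : ∀ n, IsOpen (V n) := fun n => (hBo _ (hVB n)).1
    have hVne : ∀ n, (V n).Nonempty := fun n => (hBo _ (hVB n)).2
    have hVb : ∀ U : Set X, IsOpen U → x ∈ U → ∃ n, V n ⊆ U := by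
      intro U hU hxU
      obtain ⟨W, hWB, hWU⟩ := hBb U hU hxU
      obtain ⟨n, rfl⟩ : W ∈ Set.range V := hV ▸ hWB
      exact ⟨n, hWU⟩
    have hreg : ∀ U : Set X, IsOpen U → x ∈ U →
        ∃ O : Set X, IsOpen O ∧ x ∈ O ∧ closure O ⊆ U := by
      intro U hU hxU
      obtain ⟨C, hCn, hCcl, hCU⟩ := exists_mem_nhds_isClosed_subset (hU.mem_nhds hxU)
      refine ⟨interior C, isOpen_interior, mem_interior_iff_mem_nhds.mpr hCn, ?_⟩
      calc closure (interior C) ⊆ closure C := closure_mono interior_subset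
        _ = C := hCcl.closure_eq
        _ ⊆ U := hCU
    -- Lemma A: every open neighbourhood of x contains the closure of some V k
    -- with x in that closure.
    have lemA : ∀ U : Set X, IsOpen U → x ∈ U →
        ∃ k, x ∈ closure (V k) ∧ closure (V k) ⊆ U := by
      intro U hU hxU
      obtain ⟨O, hO, hxO, hOU⟩ := hreg U hU hxU
      set W : ℕ → Set X := fun n =>
        if x ∈ closure (V n) then Set.univ else (closure (V n))ᶜ with hWdef
      have hWo : ∀ n, IsOpen (W n) := by
        intro n
        by_cases h : x ∈ closure (V n) <;>
          simp [hWdef, h, isOpen_univ, isClosed_closure.isOpen_compl]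
      have hxW : ∀ n, x ∈ W n := by
        intro n
        by_cases h : x ∈ closure (V n) <;> simp [hWdef, h]
      have hD : IsOpen (⋂ n, W n) := hP W hWo
      obtain ⟨k, hk⟩ := hVb (O ∩ ⋂ n, W n) (hO.inter hD)
        ⟨hxO, Set.mem_iInter.mpr hxW⟩
      have hkO : V k ⊆ O := fun y hy => (hk hy).1
      have hkN : x ∈ closure (V k) := by
        by_contra h
        obtain ⟨y, hy⟩ := hVne k
        have hyW : y ∈ W k := Set.mem_iInter.mp (hk hy).2 k
        rw [hWdef] at hyW
        simp only [h, if_neg, if_false] at hyW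
        exact hyW (subset_closure hy)
      exact ⟨k, hkN, (closure_mono hkO).trans hOU⟩
    by_cases hcase : ∃ k, x ∈ closure (V k) ∧
        ∀ U : Set X, IsOpen U → x ∈ U → closure (V k) ⊆ U
    · obtain ⟨k, hkcl, hkmin⟩ := hcase
      obtain ⟨y, hy⟩ := hVne k
      have hyx : x ∈ closure ({y} : Set X) := by
        rw [mem_closure_iff]
        intro O hO hxO
        exact ⟨y, hkmin O hO hxO (subset_closure hy), rfl⟩
      have hxy : y ∈ closure ({x} : Set X) :=
        (specializes_iff_mem_closure.mpr hyx).symm.mem_closure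
      have hxVk : x ∈ V k := by
        obtain ⟨z, hz1, hz2⟩ := mem_closure_iff.mp hxy (V k) (hVo k) hy
        rwa [Set.mem_singleton_iff.mp hz2] at hz1
      refine ⟨{V k}, Set.countable_singleton _, ?_, ?_⟩
      · rintro W rfl; exact ⟨hVo k, hxVk⟩
      · intro U hU hxU
        exact ⟨V k, rfl, subset_closure.trans (hkmin U hU hxU)⟩
    · push_neg at hcase
      have h' : ∀ k, ∃ Z : Set X, IsOpen Z ∧ x ∈ Z ∧
          (x ∈ closure (V k) → ¬ closure (V k) ⊆ Z) := by
        intro k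
        by_cases h : x ∈ closure (V k)
        · obtain ⟨Z, h1, h2, h3⟩ := hcase k h
          exact ⟨Z, h1, h2, fun _ => h3⟩
        · exact ⟨Set.univ, isOpen_univ, Set.mem_univ x, fun hx => absurd hx h⟩
      choose Z hZo hZx hZn using h'
      have hG : IsOpen (⋂ k, Z k) := hP Z hZo
      obtain ⟨k, hkcl, hsub⟩ := lemA (⋂ k, Z k) hG (Set.mem_iInter.mpr hZx)
      exact absurd (hsub.trans (Set.iInter_subset Z k)) (hZn k hkcl)
  tfae_finish
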